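/- The map E : ℍ → ℍ × Im(ℍ) defined by E(x + Iy) = (exp(x)·cos(y) + I·exp(x)·sin(y), I·y) for I ∈ 𝕊 an imaginary unit and x ∈ ℝ, y ≥ 0, is injective on ℍ. -/

import Mathlib

open Quaternion Set

/-- The quaternionic exponential, given by the power series `∑ qᵏ/k!`. -/
noncomputable def qexp (q : ℍ[ℝ]) : ℍ[ℝ] := NormedSpace.exp q

/-- The slice argument `arg_ℐ(q) ∈ (0,π)` of a nonreal quaternion. -/
noncomputable def sliceArg (q : ℍ[ℝ]) : ℝ := Real.arccos (q.re / ‖q‖)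

/-- The imaginary unit `ℐ(q)` of a nonreal quaternion. -/
noncomputable def unitIm (q : ℍ[ℝ]) : ℍ[ℝ] := ‖q.im‖⁻¹ • q.im

/- `Arg(q) = ℐ(q)·arg_ℐ(q)` for nonreal `q`, and `0` on the reals. -/
open scoped Classical in
noncomputable def qArg (q : ℍ[ℝ]) : ℍ[ℝ] :=
  if q.im = 0 then 0 else sliceArg q • unitIm q

/-- The `2k`-th branch of the quaternionic argument:
`Arg_{2k}(q) = ℐ(q)·(arg_ℐ(q) + 2kπ)`. -/
noncomputable def qArg2k (k : ℤ) (q : ℍ[ℝ]) : ℍ[ℝ] :=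
  (sliceArg q + 2 * (k : ℝ) * Real.pi) • unitIm q

lemma imunit_props (I : ℍ[ℝ]) (h : I * I = -1) : I.re = 0 ∧ ‖I‖ = 1 := by
  have hre : (I * I).re = (-1 : ℍ[ℝ]).re := by rw [h]
  have hi : (I * I).imI = (-1 : ℍ[ℝ]).imI := by rw [h]
  have hj : (I * I).imJ = (-1 : ℍ[ℝ]).imJ := by rw [h]
  have hk : (I * I).imK = (-1 : ℍ[ℝ]).imK := by rw [h]
  simp [Quaternion.re_mul, Quaternion.imI_mul, Quaternion.imJ_mul, Quaternion.imK_mul] at hre hi hj hk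
  have hre0 : I.re = 0 := by
    by_contra hne
    have hb : I.imI = 0 := by
      have h2 : I.re * I.imI = 0 := by linear_combination hi / 2
      exact (mul_eq_zero.mp h2).resolve_left hne
    have hc : I.imJ = 0 := by
      have h2 : I.re * I.imJ = 0 := by linear_combination hj / 2
      exact (mul_eq_zero.mp h2).resolve_left hne
    have hd : I.imK = 0 := by
      have h2 : I.re * I.imK = 0 := by linear_combination hk / 2
      exact (mul_eq_zero.mp h2).resolve_left hne
    rw [hb, hc, hd] at hre; nlinarith
  refine ⟨hre0, ?_⟩
  have : ‖I‖ * ‖I‖ = 1 := by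
    rw [← norm_mul, h]; simp
  nlinarith [norm_nonneg I]

theorem E_injective
    (x₁ x₂ y₁ y₂ : ℝ) (I₁ I₂ : ℍ[ℝ])
    (hI₁ : I₁ * I₁ = -1) (hI₂ : I₂ * I₂ = -1)
    (hy₁ : 0 ≤ y₁) (hy₂ : 0 ≤ y₂)
    (hE₁ : ((Real.exp x₁ * Real.cos y₁ : ℝ) : ℍ[ℝ]) + (Real.exp x₁ * Real.sin y₁) • I₁ =
           ((Real.exp x₂ * Real.cos y₂ : ℝ) : ℍ[ℝ]) + (Real.exp x₂ * Real.sin y₂) • I₂)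
    (hE₂ : y₁ • I₁ = y₂ • I₂) :
    ((x₁ : ℝ) : ℍ[ℝ]) + y₁ • I₁ = ((x₂ : ℝ) : ℍ[ℝ]) + y₂ • I₂ := by
  obtain ⟨hre₁, hn₁⟩ := imunit_props I₁ hI₁
  obtain ⟨hre₂, hn₂⟩ := imunit_props I₂ hI₂
  -- y₁ = y₂
  have hyy : y₁ = y₂ := by
    have := congrArg norm hE₂
    rwa [norm_smul, norm_smul, hn₁, hn₂, mul_one, mul_one,
      Real.norm_eq_abs, Real.norm_eq_abs, abs_of_nonneg hy₁, abs_of_nonneg hy₂] at this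
  subst hyy
  rw [hE₂]
  -- now suffices x₁ = x₂
  suffices hx : x₁ = x₂ by rw [hx]
  -- real and imaginary parts of hE₁
  rcases eq_or_lt_of_le hy₁ with hy0 | hy0
  · -- y = 0
    rw [← hy0] at hE₁
    simp [Real.cos_zero, Real.sin_zero] at hE₁
    exact hE₁
  · -- y > 0, so I₁ = I₂
    have hI : I₁ = I₂ := smul_right_injective _ (ne_of_gt hy0) hE₂
    subst hI
    have hrepart : Real.exp x₁ * Real.cos y₁ = Real.exp x₂ * Real.cos y₁ := by
      have := congrArg QuaternionAlgebra.re hE₁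
      simpa [hre₁] using this
    have himpart : Real.exp x₁ * Real.sin y₁ = Real.exp x₂ * Real.sin y₁ := by
      have h2 : ((Real.exp x₁ * Real.sin y₁) • I₁ : ℍ[ℝ]) = (Real.exp x₂ * Real.sin y₁) • I₁ := by
        have := hE₁
        rw [hrepart] at this
        exact add_left_cancel this
      have hI0 : I₁ ≠ 0 := by
        intro h; rw [h] at hn₁; simp at hn₁
      have := sub_eq_zero.mpr h2
      rw [← sub_smul] at this
      rcases smul_eq_zero.mp this with h | h
      · linarith [sub_eq_zero.mp h]
      · exact absurd h hI0
    have hexp : Real.exp x₁ = Real.exp x₂ := by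
      linear_combination Real.sin y₁ * himpart + Real.cos y₁ * hrepart +
        (Real.exp x₂ - Real.exp x₁) * Real.sin_sq_add_cos_sq y₁
    exact Real.exp_injective hexp
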